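/- Let P be a Poisson algebra over ℝ with identity, and let L be a finite-codimensional Lie ideal of P (a linear subspace with {P,L} ⊆ L such that the quotient vector space P/L is finite-dimensional). Then either L contains the derived ideal {P,P} (the linear span of all brackets {f,g} with f,g ∈ P), or there exists a maximal associative ideal J of P which is finite-codimensional as a linear subspace and contains {P,P}. -/

import Mathlib

section PoissonAux

variable {P : Type*} [CommRing P] [Algebra ℝ P]

namespace PoissonCodim

/-- bracket with 1 is zero -/
theorem br_one_right (br : P →ₗ[ℝ] P →ₗ[ℝ] P)
    (leibniz : ∀ f g h : P, br f (g * h) = br f g * h + g * br f h) (f : P) :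
    br f 1 = 0 := by
  have h := leibniz f 1 1
  rw [mul_one, mul_one, one_mul] at h
  exact add_eq_right.mp h.symm

theorem br_one_left (br : P →ₗ[ℝ] P →ₗ[ℝ] P)
    (anti : ∀ f g : P, br f g = - br g f)
    (leibniz : ∀ f g h : P, br f (g * h) = br f g * h + g * br f h) (g : P) :
    br 1 g = 0 := by
  rw [anti, br_one_right br leibniz, neg_zero]

/-- Leibniz in the first slot. -/
theorem leibniz_left (br : P →ₗ[ℝ] P →ₗ[ℝ] P)
    (anti : ∀ f g : P, br f g = - br g f)
    (leibniz : ∀ f g h : P, br f (g * h) = br f g * h + g * br f h) (a b y : P) :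
    br (a * b) y = br a y * b + a * br b y := by
  have h := leibniz y a b
  have h1 := anti (a*b) y
  rw [h1, h, anti y a, anti y b]
  ring


variable (br : P →ₗ[ℝ] P →ₗ[ℝ] P) (L : Submodule ℝ P)

/-- The "Lie normalizer" `C = {f | {f,P} ⊆ L}`. -/
def Csub : Submodule ℝ P where
  carrier := {f | ∀ p : P, br f p ∈ L}
  zero_mem' := by intro p; rw [map_zero]; exact L.zero_mem
  add_mem' := by
    intro a b ha hb p
    rw [map_add]
    exact L.add_mem (ha p) (hb p)
  smul_mem' := by
    intro c a ha p
    rw [map_smul]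
    exact L.smul_mem c (ha p)

theorem mem_Csub {f : P} : f ∈ Csub br L ↔ ∀ p : P, br f p ∈ L := Iff.rfl

variable (anti : ∀ f g : P, br f g = - br g f)
variable (jacobi : ∀ f g h : P, br f (br g h) = br (br f g) h + br g (br f h))
variable (leibniz : ∀ f g h : P, br f (g * h) = br f g * h + g * br f h)
variable (hL : ∀ f : P, ∀ l ∈ L, br f l ∈ L)

section
include anti hL

theorem L_le_Csub : L ≤ Csub br L := by
  intro l hl p
  rw [← neg_neg (br l p), ← anti p l]
  exact L.neg_mem (hL p l hl)

end

theorem one_mem_Csub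
    (anti : ∀ f g : P, br f g = - br g f)
    (leibniz : ∀ f g h : P, br f (g * h) = br f g * h + g * br f h) :
    (1 : P) ∈ Csub br L := by
  intro p
  rw [br_one_left br anti leibniz]
  exact L.zero_mem

/-- `{P, C} ⊆ C`. -/
theorem br_mem_Csub
    (jacobi : ∀ f g h : P, br f (br g h) = br (br f g) h + br g (br f h))
    (hL : ∀ f : P, ∀ l ∈ L, br f l ∈ L)
    {c : P} (hc : c ∈ Csub br L) (p : P) : br p c ∈ Csub br L := by
  intro w
  have hj := jacobi p c w
  have : br (br p c) w = br p (br c w) - br c (br p w) := by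
    rw [hj]; ring
  rw [this]
  exact L.sub_mem (hL p _ (hc w)) (hc (br p w))

/-- The key fact: `C` is multiplicatively closed. -/
theorem mul_mem_Csub
    (anti : ∀ f g : P, br f g = - br g f)
    (leibniz : ∀ f g h : P, br f (g * h) = br f g * h + g * br f h)
    {c c' : P} (hc : c ∈ Csub br L) (hc' : c' ∈ Csub br L) :
    c * c' ∈ Csub br L := by
  intro b
  have h1 : br c' (b * c) ∈ L := hc' (b * c)
  have h2 : br c (b * c') ∈ L := hc (b * c')
  have hsum : br c' (b * c) + br c (b * c') ∈ L := L.add_mem h1 h2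
  have hexp : br c' (b * c) + br c (b * c') = br (c * c') b := by
    rw [leibniz c' b c, leibniz c b c', anti (c*c') b, leibniz b c c',
      anti c' b, anti c b, anti c' c]
    ring
  rwa [hexp] at hsum


/-- Finite codimensionality of `C`. -/
theorem fd_quot_Csub (hL : ∀ f : P, ∀ l ∈ L, br f l ∈ L)
    (hfc : FiniteDimensional ℝ (P ⧸ L)) :
    FiniteDimensional ℝ (P ⧸ Csub br L) := by
  have hle : ∀ f : P, L ≤ L.comap (br f) := fun f l hl => hL f l hl
  let Phi : P →ₗ[ℝ] ((P ⧸ L) →ₗ[ℝ] (P ⧸ L)) :=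
    { toFun := fun f => Submodule.mapQ L L (br f) (hle f)
      map_add' := by
        intro f g
        apply Submodule.linearMap_qext
        ext p
        simp [Submodule.mapQ_apply]
      map_smul' := by
        intro c f
        apply Submodule.linearMap_qext
        ext p
        simp [Submodule.mapQ_apply] }
  have hker : LinearMap.ker Phi = Csub br L := by
    ext f
    constructor
    · intro hf p
      have : Phi f (Submodule.Quotient.mk p) = 0 := by
        rw [LinearMap.mem_ker.mp hf]; rfl
      rw [show Phi f (Submodule.Quotient.mk p) = Submodule.Quotient.mk (br f p) from
        Submodule.mapQ_apply (h := hle f) L L (br f) p] at this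
      exact (Submodule.Quotient.mk_eq_zero L).mp this
    · intro hf
      rw [LinearMap.mem_ker]
      apply Submodule.linearMap_qext
      ext p
      show Phi f (Submodule.Quotient.mk p) = 0
      rw [show Phi f (Submodule.Quotient.mk p) = Submodule.Quotient.mk (br f p) from
        Submodule.mapQ_apply (h := hle f) L L (br f) p]
      exact (Submodule.Quotient.mk_eq_zero L).mpr (hf p)
  have : FiniteDimensional ℝ (LinearMap.range Phi) := by infer_instance
  have e := LinearMap.quotKerEquivRange Phi
  rw [hker] at e
  exact Module.Finite.equiv e.symm


/-- `C` as a subalgebra. -/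
def CAlg
    (anti : ∀ f g : P, br f g = - br g f)
    (leibniz : ∀ f g h : P, br f (g * h) = br f g * h + g * br f h) : Subalgebra ℝ P :=
  (Csub br L).toSubalgebra (one_mem_Csub br L anti leibniz)
    (fun _ _ hx hy => mul_mem_Csub br L anti leibniz hx hy)


/-- Every element of `P` is integral over `C`. -/
theorem isIntegral_CAlg
    (anti : ∀ f g : P, br f g = - br g f)
    (leibniz : ∀ f g h : P, br f (g * h) = br f g * h + g * br f h)
    (hfd : FiniteDimensional ℝ (P ⧸ Csub br L)) (x : P) :
    IsIntegral (CAlg br L anti leibniz) x := by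
  classical
  set C : Submodule ℝ P := Csub br L with hC
  have hnoeth : IsNoetherian ℝ (P ⧸ C) := inferInstance
  -- the chain of spans of powers
  let g : ℕ → (P ⧸ C) := fun j => Submodule.Quotient.mk (x ^ j)
  let chain : ℕ →o Submodule ℝ (P ⧸ C) :=
    { toFun := fun n => Submodule.span ℝ (g '' Set.Iic n)
      monotone' := fun a b hab =>
        Submodule.span_mono (Set.image_mono (Set.Iic_subset_Iic.mpr hab)) }
  obtain ⟨n, hn⟩ := monotone_stabilizes_iff_noetherian.mpr hnoeth chain
  have hmem : g (n + 1) ∈ chain n := by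
    have : g (n+1) ∈ chain (n+1) := Submodule.subset_span ⟨n+1, Set.self_mem_Iic, rfl⟩
    rwa [← hn (n+1) (Nat.le_succ n)] at this
  -- rewrite as span of a finite range
  have hset : g '' Set.Iic n = Set.range (fun j : Fin (n+1) => g j) := by
    ext v
    constructor
    · rintro ⟨j, hj, rfl⟩
      exact ⟨⟨j, Nat.lt_succ_of_le hj⟩, rfl⟩
    · rintro ⟨j, rfl⟩
      exact ⟨(j : ℕ), Nat.lt_succ_iff.mp j.isLt, rfl⟩
  rw [show chain n = Submodule.span ℝ (g '' Set.Iic n) from rfl, hset] at hmem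
  rw [Submodule.mem_span_range_iff_exists_fun] at hmem
  obtain ⟨c, hc⟩ := hmem
  -- get the element of C
  have hd : x ^ (n+1) - ∑ j : Fin (n+1), c j • x ^ (j : ℕ) ∈ C := by
    rw [← Submodule.Quotient.mk_eq_zero, Submodule.Quotient.mk_sub, sub_eq_zero]
    have h2 : (Submodule.Quotient.mk (∑ j : Fin (n+1), c j • x ^ (j:ℕ)) : P ⧸ C)
        = ∑ j : Fin (n+1), c j • (Submodule.Quotient.mk (x ^ (j:ℕ)) : P ⧸ C) := by
      simp only [← Submodule.mkQ_apply, map_sum, map_smul]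
    rw [h2]
    exact hc.symm
  set d : P := x ^ (n+1) - ∑ j : Fin (n+1), c j • x ^ (j : ℕ) with hdd
  -- coefficients in the subalgebra
  set CA := CAlg br L anti leibniz with hCA
  have hmemCA : d ∈ CA := hd
  -- the monic polynomial
  let q : Polynomial CA :=
    Polynomial.X ^ (n+1) -
      (∑ j : Fin (n+1), Polynomial.C (algebraMap ℝ CA (c j)) * Polynomial.X ^ (j : ℕ)
        + Polynomial.C (⟨d, hmemCA⟩ : CA))
  refine ⟨q, ?_, ?_⟩
  · apply Polynomial.monic_X_pow_sub
    apply lt_of_le_of_lt (Polynomial.degree_add_le _ _)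
    apply max_lt
    · apply lt_of_le_of_lt (Polynomial.degree_sum_le _ _)
      apply Finset.sup_lt_iff (by exact_mod_cast WithBot.bot_lt_coe (n+1)) |>.mpr
      intro j _
      apply lt_of_le_of_lt (Polynomial.degree_C_mul_X_pow_le _ _)
      exact_mod_cast Nat.cast_lt.mpr (j.isLt)
    · apply lt_of_le_of_lt (Polynomial.degree_C_le)
      exact_mod_cast Nat.succ_pos n
  · -- aeval x q = 0
    show Polynomial.eval₂ (algebraMap CA P) x q = 0
    have hcoef : ∀ j : Fin (n+1),
        (Polynomial.aeval x) (Polynomial.C (algebraMap ℝ CA (c j)) * Polynomial.X ^ (j:ℕ))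
          = c j • x ^ (j : ℕ) := by
      intro j
      rw [map_mul, Polynomial.aeval_C, map_pow, Polynomial.aeval_X, Algebra.smul_def]
      rfl
    have h0 : (Polynomial.aeval x) q = 0 := by
      rw [show q = Polynomial.X ^ (n+1) -
        (∑ j : Fin (n+1), Polynomial.C (algebraMap ℝ CA (c j)) * Polynomial.X ^ (j : ℕ)
          + Polynomial.C (⟨d, hmemCA⟩ : CA)) from rfl]
      rw [map_sub, map_add, map_sum, map_pow, Polynomial.aeval_X, Polynomial.aeval_C]
      have hs : ∑ j : Fin (n+1), (Polynomial.aeval x)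
          (Polynomial.C (algebraMap ℝ CA (c j)) * Polynomial.X ^ (j:ℕ))
          = ∑ j : Fin (n+1), c j • x ^ (j : ℕ) := Finset.sum_congr rfl (fun j _ => hcoef j)
      rw [hs]
      have halg : (algebraMap CA P) (⟨d, hmemCA⟩ : CA) = d := rfl
      rw [halg, hdd]
      ring
    rwa [Polynomial.aeval_def] at h0


/-- `P` is a finite module over `C`. -/
theorem module_finite_CAlg
    (anti : ∀ f g : P, br f g = - br g f)
    (leibniz : ∀ f g h : P, br f (g * h) = br f g * h + g * br f h)
    (hfd : FiniteDimensional ℝ (P ⧸ Csub br L)) :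
    Module.Finite (CAlg br L anti leibniz) P := by
  classical
  set C : Submodule ℝ P := Csub br L with hC
  set CA := CAlg br L anti leibniz with hCA
  obtain ⟨s, hs⟩ := Module.Finite.fg_top (R := ℝ) (M := P ⧸ C)
  let f : (P ⧸ C) → P := Function.surjInv (Submodule.Quotient.mk_surjective C)
  have hf : ∀ v : P ⧸ C, Submodule.Quotient.mk (f v) = v :=
    fun v => Function.surjInv_eq (Submodule.Quotient.mk_surjective C) v
  let t : Finset P := s.image f
  have hadj : Algebra.adjoin CA (t : Set P) = ⊤ := by
    rw [eq_top_iff]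
    intro p _
    have hp : (Submodule.Quotient.mk p : P ⧸ C) ∈ Submodule.span ℝ (s : Set (P ⧸ C)) := by
      rw [hs]; trivial
    rw [Submodule.mem_span_finset] at hp
    obtain ⟨c, -, hc⟩ := hp
    have hd : p - ∑ v ∈ s, c v • f v ∈ C := by
      rw [← Submodule.Quotient.mk_eq_zero, Submodule.Quotient.mk_sub, sub_eq_zero]
      have h2 : (Submodule.Quotient.mk (∑ v ∈ s, c v • f v) : P ⧸ C)
          = ∑ v ∈ s, c v • (Submodule.Quotient.mk (f v) : P ⧸ C) := by
        simp only [← Submodule.mkQ_apply, map_sum, map_smul]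
      rw [h2]
      have h3 : ∑ v ∈ s, c v • (Submodule.Quotient.mk (f v) : P ⧸ C) = ∑ v ∈ s, c v • v :=
        Finset.sum_congr rfl (fun v _ => by rw [hf v])
      rw [h3, hc]
    have hdCA : p - ∑ v ∈ s, c v • f v ∈ CA := hd
    have h4 : (p - ∑ v ∈ s, c v • f v) ∈ Algebra.adjoin CA (t : Set P) := by
      have : p - ∑ v ∈ s, c v • f v
          = algebraMap CA P ⟨p - ∑ v ∈ s, c v • f v, hdCA⟩ := rfl
      rw [this]
      exact Subalgebra.algebraMap_mem _ _
    have h5 : (∑ v ∈ s, c v • f v) ∈ Algebra.adjoin CA (t : Set P) := by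
      apply Subalgebra.sum_mem
      intro v hv
      have hfv : f v ∈ Algebra.adjoin CA (t : Set P) :=
        Algebra.subset_adjoin (Finset.mem_coe.mpr (Finset.mem_image_of_mem f hv))
      have : c v • f v = algebraMap ℝ P (c v) * f v := by rw [Algebra.smul_def]
      rw [this]
      apply mul_mem _ hfv
      have : algebraMap ℝ P (c v) = algebraMap CA P (algebraMap ℝ CA (c v)) := rfl
      rw [this]
      exact Subalgebra.algebraMap_mem _ _
    have := Subalgebra.add_mem _ h4 h5
    simpa using this
  have hfg : (Algebra.adjoin CA (t : Set P)).toSubmodule.FG :=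
    fg_adjoin_of_finite t.finite_toSet
      (fun x _ => isIntegral_CAlg br L anti leibniz hfd x)
  rw [hadj] at hfg
  rw [Algebra.top_toSubmodule] at hfg
  exact ⟨hfg⟩


theorem fdq_of_le {A B : Submodule ℝ P} (h : A ≤ B)
    (hA : FiniteDimensional ℝ (P ⧸ A)) : FiniteDimensional ℝ (P ⧸ B) := by
  have hle : A ≤ B.comap LinearMap.id := h
  have hsurj : Function.Surjective (Submodule.mapQ A B LinearMap.id hle) := by
    intro b
    obtain ⟨p, rfl⟩ := Submodule.Quotient.mk_surjective B b
    exact ⟨Submodule.Quotient.mk p, Submodule.mapQ_apply (h := hle) A B LinearMap.id p⟩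
  exact Module.Finite.of_surjective _ hsurj

theorem fdq_inf {A B : Submodule ℝ P}
    (hA : FiniteDimensional ℝ (P ⧸ A)) (hB : FiniteDimensional ℝ (P ⧸ B)) :
    FiniteDimensional ℝ (P ⧸ (A ⊓ B)) := by
  let phi : P →ₗ[ℝ] (P ⧸ A) × (P ⧸ B) := A.mkQ.prod B.mkQ
  have hker : LinearMap.ker phi = A ⊓ B := by
    rw [LinearMap.ker_prod, Submodule.ker_mkQ, Submodule.ker_mkQ]
  have e := LinearMap.quotKerEquivRange phi
  rw [hker] at e
  have : FiniteDimensional ℝ (LinearMap.range phi) := inferInstance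
  exact Module.Finite.equiv e.symm

theorem fdq_comap_mul {A : Submodule ℝ P} (hA : FiniteDimensional ℝ (P ⧸ A)) (g : P) :
    FiniteDimensional ℝ (P ⧸ (A.comap (LinearMap.mulRight ℝ g))) := by
  let phi : P →ₗ[ℝ] (P ⧸ A) := A.mkQ.comp (LinearMap.mulRight ℝ g)
  have hker : LinearMap.ker phi = A.comap (LinearMap.mulRight ℝ g) := by
    rw [LinearMap.ker_comp, Submodule.ker_mkQ]
  have e := LinearMap.quotKerEquivRange phi
  rw [hker] at e
  have : FiniteDimensional ℝ (LinearMap.range phi) := inferInstance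
  exact Module.Finite.equiv e.symm

/-- The conductor ideal `c = {a | aP ⊆ C}`. -/
def cond : Ideal P where
  carrier := {a | ∀ p : P, a * p ∈ Csub br L}
  zero_mem' := by intro p; rw [zero_mul]; exact (Csub br L).zero_mem
  add_mem' := by
    intro a b ha hb p
    rw [add_mul]
    exact (Csub br L).add_mem (ha p) (hb p)
  smul_mem' := by
    intro c a ha p
    rw [smul_eq_mul, show c * a * p = a * (c * p) by ring]
    exact ha (c * p)

theorem mem_cond {a : P} : a ∈ cond br L ↔ ∀ p : P, a * p ∈ Csub br L := Iff.rfl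


theorem cond_le_Csub {a : P} (ha : a ∈ cond br L) : a ∈ Csub br L := by
  have := ha 1
  rwa [mul_one] at this

/-- The conductor is stable under all hamiltonians: `{P, c} ⊆ c`. -/
theorem br_mem_cond
    (anti : ∀ f g : P, br f g = - br g f)
    (jacobi : ∀ f g h : P, br f (br g h) = br (br f g) h + br g (br f h))
    (leibniz : ∀ f g h : P, br f (g * h) = br f g * h + g * br f h)
    (hL : ∀ f : P, ∀ l ∈ L, br f l ∈ L)
    {a : P} (ha : a ∈ cond br L) (p : P) : br p a ∈ cond br L := by
  intro q
  have key : br p a * q = br p (a * q) - a * br p q := by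
    rw [leibniz p a q]; ring
  rw [key]
  apply (Csub br L).sub_mem
  · exact br_mem_Csub br L jacobi hL (ha q) p
  · exact ha (br p q)

theorem br_mem_cond'
    (anti : ∀ f g : P, br f g = - br g f)
    (jacobi : ∀ f g h : P, br f (br g h) = br (br f g) h + br g (br f h))
    (leibniz : ∀ f g h : P, br f (g * h) = br f g * h + g * br f h)
    (hL : ∀ f : P, ∀ l ∈ L, br f l ∈ L)
    {a : P} (ha : a ∈ cond br L) (p : P) : br a p ∈ cond br L := by
  rw [anti a p]
  exact (cond br L).neg_mem (br_mem_cond br L anti jacobi leibniz hL ha p)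

theorem cond_ne_top (hC : Csub br L ≠ ⊤) : cond br L ≠ ⊤ := by
  intro h
  apply hC
  rw [eq_top_iff]
  intro p _
  have h1 : (1 : P) ∈ cond br L := h ▸ Submodule.mem_top
  have := h1 p
  rwa [one_mul] at this

/-- The conductor has finite codimension. -/
theorem fd_quot_cond
    (anti : ∀ f g : P, br f g = - br g f)
    (leibniz : ∀ f g h : P, br f (g * h) = br f g * h + g * br f h)
    (hfd : FiniteDimensional ℝ (P ⧸ Csub br L)) :
    FiniteDimensional ℝ (P ⧸ (cond br L).restrictScalars ℝ) := by
  classical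
  have hfin : Module.Finite (CAlg br L anti leibniz) P :=
    module_finite_CAlg br L anti leibniz hfd
  set C : Submodule ℝ P := Csub br L with hC
  set CA := CAlg br L anti leibniz with hCA
  obtain ⟨T, hT⟩ := hfin.fg_top
  let K : Submodule ℝ P := C ⊓ T.inf (fun g => C.comap (LinearMap.mulRight ℝ g))
  have hK : FiniteDimensional ℝ (P ⧸ K) := by
    have : ∀ (S : Finset P),
        FiniteDimensional ℝ (P ⧸ (C ⊓ S.inf (fun g => C.comap (LinearMap.mulRight ℝ g)))) := by
      intro S
      induction S using Finset.induction_on with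
      | empty =>
        rw [Finset.inf_empty, inf_top_eq]
        exact hfd
      | insert _ _ hx ih =>
        rename_i a S'
        rw [Finset.inf_insert, ← inf_assoc, inf_comm C (C.comap (LinearMap.mulRight ℝ a)),
          inf_assoc]
        exact fdq_inf (fdq_comap_mul hfd a) ih
    exact this T
  apply fdq_of_le (A := K) (B := (cond br L).restrictScalars ℝ) _ hK
  -- K ≤ cond
  intro a haK
  obtain ⟨haC, haI⟩ := haK
  intro p
  have hp : p ∈ Submodule.span CA (T : Set P) := by rw [hT]; trivial
  induction hp using Submodule.span_induction with
  | mem x hx =>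
    have := Finset.inf_le (f := fun g => C.comap (LinearMap.mulRight ℝ g)) hx haI
    exact this
  | zero => rw [mul_zero]; exact C.zero_mem
  | add x y hx hy ihx ihy => rw [mul_add]; exact C.add_mem ihx ihy
  | smul r x hx ihx =>
    have hrw : a * (r • x) = (r : P) * (a * x) := by
      rw [show (r • x : P) = (r : P) * x from rfl]
      ring
    rw [hrw]
    exact mul_mem_Csub br L anti leibniz r.2 ihx


section Calculus

variable (anti : ∀ f g : P, br f g = - br g f)
variable (leibniz : ∀ f g h : P, br f (g * h) = br f g * h + g * br f h)

include leibniz in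
theorem br_pow (u y : P) (n : ℕ) :
    br y (u ^ (n+1)) = ((n : P) + 1) * (u ^ n * br y u) := by
  induction n with
  | zero => rw [pow_zero, pow_one]; push_cast; ring
  | succ n ih =>
    rw [pow_succ, leibniz y (u^(n+1)) u, ih, pow_succ]
    push_cast
    ring

include anti leibniz in
theorem br_pow' (u y : P) (n : ℕ) :
    br (u ^ (n+1)) y = ((n : P) + 1) * (u ^ n * br u y) := by
  rw [anti, br_pow br leibniz u y n, anti u y]
  ring

include anti leibniz in
theorem br_algebraMap (a : ℝ) (y : P) : br (algebraMap ℝ P a) y = 0 := by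
  have : algebraMap ℝ P a = a • (1 : P) := by rw [Algebra.smul_def, mul_one]
  rw [this, map_smul, LinearMap.smul_apply, br_one_left br anti leibniz, smul_zero]

include anti leibniz in
/-- Chain rule. -/
theorem br_aeval (u y : P) (g : Polynomial ℝ) :
    br (Polynomial.aeval u g) y = Polynomial.aeval u (Polynomial.derivative g) * br u y := by
  induction g using Polynomial.induction_on' with
  | add p q hp hq =>
    simp only [map_add, LinearMap.add_apply, hp, hq, add_mul]
  | monomial n a =>
    cases n with
    | zero =>
      rw [Polynomial.aeval_monomial, pow_zero, mul_one, Polynomial.derivative_monomial]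
      simp [br_algebraMap br anti leibniz]
    | succ n =>
      rw [Polynomial.aeval_monomial, Polynomial.derivative_monomial]
      rw [leibniz_left br anti leibniz, br_algebraMap br anti leibniz, zero_mul, zero_add]
      rw [br_pow' br anti leibniz u y n]
      rw [Polynomial.aeval_monomial]
      rw [Nat.add_sub_cancel]
      rw [map_mul]
      push_cast
      ring


include leibniz in
theorem nilp_step (I : Ideal P) (hbr : ∀ p a : P, a ∈ I → br p a ∈ I)
    (u y : P) (B j : ℕ)
    (hW : u ^ (B+1) * (br y u) ^ (2*j+1) ∈ I) :
    u ^ B * (br y u) ^ (2*j+3) ∈ I := by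
  set v : P := br y u with hv
  have h1 : br y (u ^ (B+1) * v ^ (2*j+1)) ∈ I := hbr y _ hW
  have h2 : v * br y (u ^ (B+1) * v ^ (2*j+1)) ∈ I := I.mul_mem_left v h1
  have h3 : ((2*j : P)+1) * ((u ^ (B+1) * v ^ (2*j+1)) * br y v) ∈ I :=
    I.mul_mem_left _ (I.mul_mem_right _ hW)
  have key : ((B : P)+1) * (u ^ B * v ^ (2*j+3))
      = v * br y (u ^ (B+1) * v ^ (2*j+1))
        - ((2*j : P)+1) * ((u ^ (B+1) * v ^ (2*j+1)) * br y v) := by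
    rw [leibniz y (u^(B+1)) (v^(2*j+1)), br_pow br leibniz u y B,
      show v ^ (2*j+1) = v ^ ((2*j)+1) from rfl, br_pow br leibniz v y (2*j)]
    push_cast
    ring
  have h4 : ((B : P)+1) * (u ^ B * v ^ (2*j+3)) ∈ I := by
    rw [key]; exact I.sub_mem h2 h3
  -- divide by the nonzero scalar B+1
  have hcast : ((B : P)+1) = algebraMap ℝ P ((B : ℝ)+1) := by
    rw [map_add, map_one, map_natCast]
  rw [hcast] at h4
  have hc : ((B : ℝ)+1) ≠ 0 := by positivity
  have h5 := I.mul_mem_left (algebraMap ℝ P ((B : ℝ)+1)⁻¹) h4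
  rwa [← mul_assoc, ← map_mul, inv_mul_cancel₀ hc, map_one, one_mul] at h5

include leibniz in
/-- If `u ^ M ∈ I` then `(br y u) ^ (2M-1) ∈ I`. -/
theorem nilp_br (I : Ideal P) (hbr : ∀ p a : P, a ∈ I → br p a ∈ I)
    (u y : P) (M : ℕ) (hu : u ^ (M+1) ∈ I) :
    (br y u) ^ (2*M+1) ∈ I := by
  set v : P := br y u with hv
  have base : u ^ M * v ^ (2*0+1) ∈ I := by
    have h1 : br y (u ^ (M+1)) ∈ I := hbr y _ hu
    rw [br_pow br leibniz u y M] at h1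
    have hcast : ((M : P)+1) = algebraMap ℝ P ((M : ℝ)+1) := by
      rw [map_add, map_one, map_natCast]
    rw [hcast] at h1
    have hc : ((M : ℝ)+1) ≠ 0 := by positivity
    have h5 := I.mul_mem_left (algebraMap ℝ P ((M : ℝ)+1)⁻¹) h1
    rw [← mul_assoc, ← map_mul, inv_mul_cancel₀ hc, map_one, one_mul] at h5
    simpa using h5
  have main : ∀ i : ℕ, i ≤ M → u ^ (M - i) * v ^ (2*i+1) ∈ I := by
    intro i
    induction i with
    | zero => intro _; simpa using base
    | succ i ih =>
      intro hi
      have hi' : i ≤ M := Nat.le_of_succ_le hi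
      have prev := ih hi'
      have hexp : M - i = (M - (i+1)) + 1 := by omega
      rw [hexp] at prev
      have := nilp_step br leibniz I hbr u y (M - (i+1)) i prev
      have hexp2 : 2*i+3 = 2*(i+1)+1 := by omega
      rwa [hexp2] at this
  have := main M (le_refl M)
  simpa using this

end Calculus

end PoissonCodim
end PoissonAux

open PoissonCodim

/-- If `L` is a finite-codimensional Lie ideal of a unital Poisson
algebra `P` over `ℝ`, then either `L` contains the derived ideal `{P,P}`, or there is a
maximal finite-codimensional associative ideal `J` of `P` with `{P,P} ⊆ J`. -/
theorem finite_codim_lie_ideal_dichotomy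
    {P : Type*} [CommRing P] [Algebra ℝ P]
    (br : P →ₗ[ℝ] P →ₗ[ℝ] P)
    (anti : ∀ f g : P, br f g = - br g f)
    (jacobi : ∀ f g h : P, br f (br g h) = br (br f g) h + br g (br f h))
    (leibniz : ∀ f g h : P, br f (g * h) = br f g * h + g * br f h)
    (L : Submodule ℝ P)
    (hL : ∀ f : P, ∀ l ∈ L, br f l ∈ L)
    (hfc : FiniteDimensional ℝ (P ⧸ L)) :
    Submodule.span ℝ {x : P | ∃ f g : P, x = br f g} ≤ L ∨
    ∃ J : Ideal P, J.IsMaximal ∧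
      FiniteDimensional ℝ (P ⧸ J.restrictScalars ℝ) ∧
      Submodule.span ℝ {x : P | ∃ f g : P, x = br f g} ≤ J.restrictScalars ℝ := by
  by_cases hall : ∀ f g : P, br f g ∈ L
  · left
    apply Submodule.span_le.mpr
    rintro x ⟨f, g, rfl⟩
    exact hall f g
  right
  push_neg at hall
  obtain ⟨f₀, g₀, hf₀⟩ := hall
  -- C is a proper subalgebra of finite codimension
  have hCne : Csub br L ≠ ⊤ := by
    intro h
    exact hf₀ ((h ▸ Submodule.mem_top : f₀ ∈ Csub br L) g₀)
  have hCfd : FiniteDimensional ℝ (P ⧸ Csub br L) := fd_quot_Csub br L hL hfc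
  -- the conductor ideal
  set cI : Ideal P := cond br L with hcI
  have hcIfd : FiniteDimensional ℝ (P ⧸ cI.restrictScalars ℝ) :=
    fd_quot_cond br L anti leibniz hCfd
  have hcIne : cI ≠ ⊤ := cond_ne_top br L hCne
  have hbrcI : ∀ p a : P, a ∈ cI → br p a ∈ cI :=
    fun p a ha => br_mem_cond br L anti jacobi leibniz hL ha p
  -- the quotient ring
  have hQnt : Nontrivial (P ⧸ cI) := by
    apply Ideal.Quotient.nontrivial_iff.mpr
    exact hcIne
  have hQfd : FiniteDimensional ℝ (P ⧸ cI) := by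
    have hker : cI.restrictScalars ℝ ≤
        LinearMap.ker ((Ideal.Quotient.mkₐ ℝ cI).toLinearMap) := by
      intro a ha
      simp only [LinearMap.mem_ker, AlgHom.toLinearMap_apply, Ideal.Quotient.mkₐ_eq_mk]
      exact (Ideal.Quotient.eq_zero_iff_mem).mpr ha
    have hsurj : Function.Surjective
        (Submodule.liftQ (cI.restrictScalars ℝ)
          ((Ideal.Quotient.mkₐ ℝ cI).toLinearMap) hker) := by
      intro q
      obtain ⟨p, rfl⟩ := Ideal.Quotient.mk_surjective q
      exact ⟨Submodule.Quotient.mk p, rfl⟩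
    exact Module.Finite.of_surjective _ hsurj
  -- the reduced quotient
  have hrad : (nilradical (P ⧸ cI)).IsRadical := Ideal.radical_isRadical (0 : Ideal (P ⧸ cI))
  have hred : IsReduced ((P ⧸ cI) ⧸ nilradical (P ⧸ cI)) :=
    (Ideal.isRadical_iff_quotient_reduced _).mp hrad
  have hQbfd : FiniteDimensional ℝ ((P ⧸ cI) ⧸ nilradical (P ⧸ cI)) := by
    have hsurj : Function.Surjective
        ((Ideal.Quotient.mkₐ ℝ (nilradical (P ⧸ cI))).toLinearMap) :=
      Ideal.Quotient.mk_surjective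
    exact Module.Finite.of_surjective _ hsurj
  -- choose a maximal ideal
  obtain ⟨mbar, hmbar⟩ := Ideal.exists_maximal (P ⧸ cI)
  set J : Ideal P := Ideal.comap (Ideal.Quotient.mk cI) mbar with hJ
  have hJmax : J.IsMaximal :=
    Ideal.comap_isMaximal_of_surjective _ Ideal.Quotient.mk_surjective
  have hcJ : cI ≤ J := by
    intro a ha
    show Ideal.Quotient.mk cI a ∈ mbar
    rw [Ideal.Quotient.eq_zero_iff_mem.mpr ha]
    exact mbar.zero_mem
  have hJfd : FiniteDimensional ℝ (P ⧸ J.restrictScalars ℝ) :=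
    fdq_of_le (A := cI.restrictScalars ℝ) (B := J.restrictScalars ℝ) hcJ hcIfd
  have hJprime : J.IsPrime := hJmax.isPrime
  refine ⟨J, hJmax, hJfd, ?_⟩
  apply Submodule.span_le.mpr
  rintro w ⟨x, y, rfl⟩
  show br x y ∈ J
  -- the element in the double quotient
  set Q : Type _ := P ⧸ cI with hQ
  set N : Ideal Q := nilradical Q with hN
  set xt : Q ⧸ N := Ideal.Quotient.mk N (Ideal.Quotient.mk cI x) with hxt
  have hint : IsIntegral ℝ xt := IsIntegral.of_finite ℝ xt
  set r : Polynomial ℝ := minpoly ℝ xt with hr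
  have hrne : r ≠ 0 := minpoly.ne_zero hint
  -- r is squarefree
  have hsf : Squarefree r := by
    intro w hw
    by_contra hwu
    obtain ⟨t, ht⟩ := hw
    have htne : t ≠ 0 := by
      intro h
      rw [h, mul_zero] at ht
      exact hrne ht
    have hwne : w ≠ 0 := by
      intro h
      rw [h, mul_zero, zero_mul] at ht
      exact hrne ht
    have hsq : (Polynomial.aeval xt (w * t)) * (Polynomial.aeval xt (w * t)) = 0 := by
      have : (w * t) * (w * t) = r * t := by rw [ht]; ring
      rw [← map_mul, this, map_mul, minpoly.aeval, zero_mul]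
    have hnil : IsNilpotent (Polynomial.aeval xt (w * t)) := ⟨2, by rw [pow_two, hsq]⟩
    have hz : Polynomial.aeval xt (w * t) = 0 := hnil.eq_zero
    have hdvd : r ∣ w * t := minpoly.dvd ℝ xt hz
    obtain ⟨c, hc⟩ := hdvd
    rw [ht] at hc
    -- w * w * t * c = w * t  => w * c = 1
    have hwt : w * t ≠ 0 := mul_ne_zero hwne htne
    have : (w * t) * 1 = (w * t) * (w * c) := by
      nth_rewrite 1 [hc]
      ring
    have hone : (1 : Polynomial ℝ) = w * c := mul_left_cancel₀ hwt this
    exact hwu (IsUnit.of_mul_eq_one c hone.symm)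
  have hsep : r.Separable := PerfectField.separable_iff_squarefree.mpr hsf
  -- the evaluated element u
  set u : P := Polynomial.aeval x r with hu
  have humem : ∃ M : ℕ, u ^ (M + 1) ∈ cI := by
    have h0 : Polynomial.aeval xt r = 0 := minpoly.aeval ℝ xt
    have h1 : Ideal.Quotient.mk N (Ideal.Quotient.mk cI u) = 0 := by
      rw [hu]
      rw [show (Ideal.Quotient.mk cI) (Polynomial.aeval x r)
          = Polynomial.aeval (Ideal.Quotient.mk cI x) r from
        (Polynomial.aeval_algHom_apply (Ideal.Quotient.mkₐ ℝ cI) x r).symm]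
      rw [show (Ideal.Quotient.mk N) (Polynomial.aeval (Ideal.Quotient.mk cI x) r)
          = Polynomial.aeval xt r from
        (Polynomial.aeval_algHom_apply (Ideal.Quotient.mkₐ ℝ N) _ r).symm]
      exact h0
    have h2 : (Ideal.Quotient.mk cI u) ∈ N := Ideal.Quotient.eq_zero_iff_mem.mp h1
    obtain ⟨M', hM'⟩ := mem_nilradical.mp h2
    cases M' with
    | zero =>
      rw [pow_zero] at hM'
      exact absurd hM' one_ne_zero
    | succ M =>
      refine ⟨M, ?_⟩
      rw [← Ideal.Quotient.eq_zero_iff_mem, map_pow]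
      exact hM'
  obtain ⟨M, huM⟩ := humem
  -- apply the nilpotency lemma
  have hbig : (br y u) ^ (2*M+1) ∈ cI := nilp_br br leibniz cI hbrcI u y M huM
  -- chain rule
  have hchain : br u y = Polynomial.aeval x (Polynomial.derivative r) * br x y :=
    br_aeval br anti leibniz x y r
  have hprod : (Polynomial.aeval x (Polynomial.derivative r) * br x y) ^ (2*M+1) ∈ J := by
    apply hcJ
    have : (Polynomial.aeval x (Polynomial.derivative r) * br x y) ^ (2*M+1)
        = - ((br y u) ^ (2*M+1)) := by
      rw [← hchain, anti u y]
      exact Odd.neg_pow (odd_two_mul_add_one M) _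
    rw [this]
    exact cI.neg_mem hbig
  have hmem : Polynomial.aeval x (Polynomial.derivative r) * br x y ∈ J :=
    hJprime.mem_of_pow_mem _ hprod
  have huJ : u ∈ J := by
    apply hJprime.mem_of_pow_mem (M+1)
    exact hcJ huM
  rcases hJprime.mem_or_mem hmem with hd | hz
  · -- derivative value in J: contradiction with coprimality
    exfalso
    obtain ⟨a, b, hab⟩ := hsep
    have : (1 : P) ∈ J := by
      have := congrArg (Polynomial.aeval x) hab
      rw [map_add, map_mul, map_mul, map_one] at this
      rw [← this]
      exact J.add_mem (J.mul_mem_left _ huJ) (J.mul_mem_left _ hd)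
    exact hJmax.ne_top ((Ideal.eq_top_iff_one J).mpr this)
  · exact hz
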